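/- Let G be a group, M a subgroup of G, and H a subgroup of G of finite index containing M. If M is separable in H (as a subset), then M is separable in G. -/

import Mathlib

/-- A subset `M` of a group `G` is separable if every `a ∈ G` with `a ∉ M` can be
separated from `M` by a homomorphism of `G` onto a finite group. -/
def Separable' {G : Type} [Group G] (M : Set G) : Prop :=
  ∀ a : G, a ∉ M →
    ∃ (X : Type) (_ : Group X), Finite X ∧
      ∃ φ : G →* X, Function.Surjective φ ∧ φ a ∉ φ '' M

/-- If `M ≤ H ≤ G` with `[G : H]` finite and `M` is separable in `H`, then `M` is
separable in `G`. -/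
theorem separable_of_separable_finiteIndex (G : Type) [Group G]
    (M H : Subgroup G) (hMH : M ≤ H) [H.FiniteIndex]
    (hsep : Separable' {x : H | (x : G) ∈ M}) :
    Separable' (M : Set G) := by
  intro a haM
  by_cases haH : a ∈ H
  · obtain ⟨X, hXgrp, hXfin, φ, hφsurj, hφa⟩ := hsep ⟨a, haH⟩ haM
    letI := hXgrp
    -- N = image of ker φ in G
    set N : Subgroup G := (φ.ker).map H.subtype with hN
    have hNH : N ≤ H := by
      rintro x ⟨y, _, rfl⟩; exact y.2
    have hkerfin : φ.ker.FiniteIndex := by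
      have e : (↥H ⧸ φ.ker) ≃ X := (QuotientGroup.quotientKerEquivOfSurjective φ hφsurj).toEquiv
      have : Finite (↥H ⧸ φ.ker) := Finite.of_equiv X e.symm
      exact @Subgroup.finiteIndex_of_finite_quotient ↥H _ φ.ker this
    have hNfin : N.FiniteIndex := by
      constructor
      have hrel : N.relIndex H * H.index = N.index := Subgroup.relIndex_mul_index hNH
      have hrel2 : N.relIndex H = φ.ker.index := by
        unfold Subgroup.relIndex
        rw [Subgroup.subgroupOf, hN,
          Subgroup.comap_map_eq_self_of_injective H.subtype_injective]
      rw [← hrel, hrel2]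
      exact mul_ne_zero hkerfin.index_ne_zero Subgroup.FiniteIndex.index_ne_zero
    set K : Subgroup G := N.normalCore with hK
    have hKfin : K.FiniteIndex := Subgroup.finiteIndex_normalCore N
    refine ⟨G ⧸ K, inferInstance, Subgroup.finite_quotient_of_finiteIndex,
      QuotientGroup.mk' K, QuotientGroup.mk'_surjective K, ?_⟩
    rintro ⟨m, hmM, hma⟩
    have : m⁻¹ * a ∈ K := by
      rw [QuotientGroup.mk'_apply, QuotientGroup.mk'_apply, QuotientGroup.eq] at hma
      exact hma
    have hmaN : m⁻¹ * a ∈ N := N.normalCore_le this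
    obtain ⟨y, hy, hyeq⟩ := hmaN
    have haeq : (⟨a, haH⟩ : H) = ⟨m, hMH hmM⟩ * y := by
      ext
      simp only [Subgroup.coe_mul]
      rw [show (y : G) = m⁻¹ * a from hyeq]
      group
    apply hφa
    refine ⟨⟨m, hMH hmM⟩, hmM, ?_⟩
    rw [haeq, map_mul, hy, mul_one]
  · set K : Subgroup G := H.normalCore with hK
    have hKfin : K.FiniteIndex := Subgroup.finiteIndex_normalCore H
    refine ⟨G ⧸ K, inferInstance, Subgroup.finite_quotient_of_finiteIndex,
      QuotientGroup.mk' K, QuotientGroup.mk'_surjective K, ?_⟩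
    rintro ⟨m, hmM, hma⟩
    have : m⁻¹ * a ∈ K := by
      rw [QuotientGroup.mk'_apply, QuotientGroup.mk'_apply, QuotientGroup.eq] at hma
      exact hma
    exact haH (by simpa using H.mul_mem (hMH hmM) (H.normalCore_le this))
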